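/- For an observable M with n effects M_1,…,M_n on a finite-dimensional Hilbert space, the optimal average success probability of labeling over all strategies (including entanglement-assisted ones) is p_s = (1/(n-1)!) · α_M, where α_M = max over density operators ρ and indices j of Tr[ρ M_j]; i.e., entanglement assistance does not improve over the simple scheme. -/

import Mathlib

open Matrix Finset Equiv
open scoped ComplexOrder

/-- A density operator: positive semidefinite with unit trace. -/
def IsDensity {d : ℕ} (ρ : Matrix (Fin d) (Fin d) ℂ) : Prop :=
  ρ.PosSemidef ∧ ρ.trace = 1

lemma psd_diag_nonneg {d : ℕ} {A : Matrix (Fin d) (Fin d) ℂ} (hA : A.PosSemidef) (i : Fin d) :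
    0 ≤ A i i := by
  exact hA.diag_nonneg

lemma psd_trace_re_nonneg {d : ℕ} {A : Matrix (Fin d) (Fin d) ℂ} (hA : A.PosSemidef) :
    0 ≤ (A.trace).re := by
  rw [Matrix.trace, Complex.re_sum]
  exact Finset.sum_nonneg fun i _ => (Complex.le_def.mp (psd_diag_nonneg hA i)).1

lemma psd_trace_real {d : ℕ} {A : Matrix (Fin d) (Fin d) ℂ} (hA : A.PosSemidef) :
    A.trace = ((A.trace).re : ℂ) := by
  apply Complex.ext
  · simp
  · rw [Matrix.trace]
    simp only [Complex.im_sum, Complex.ofReal_im]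
    exact Finset.sum_eq_zero fun i _ => (Complex.le_def.mp (psd_diag_nonneg hA i)).2.symm

lemma psd_trace_eq_zero {d : ℕ} {A : Matrix (Fin d) (Fin d) ℂ} (hA : A.PosSemidef)
    (h : (A.trace).re = 0) : A = 0 := by
  obtain ⟨B, rfl⟩ : ∃ B : Matrix (Fin d) (Fin d) ℂ, A = Bᴴ * B := by
    open scoped MatrixOrder in exact CStarAlgebra.nonneg_iff_eq_star_mul_self.mp hA.nonneg
  have hB : B = 0 := by
    have htr : (Bᴴ * B).trace.re = ∑ i, ∑ j, Complex.normSq (B j i) := by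
      rw [Matrix.trace, Complex.re_sum]
      refine Finset.sum_congr rfl fun i _ => ?_
      simp only [Matrix.diag, Matrix.mul_apply, Complex.re_sum, Matrix.conjTranspose_apply]
      refine Finset.sum_congr rfl fun j _ => ?_
      rw [RCLike.star_def, ← Complex.normSq_eq_conj_mul_self, Complex.ofReal_re]
    rw [htr] at h
    have := (Finset.sum_eq_zero_iff_of_nonneg (fun i _ => Finset.sum_nonneg
        (fun j _ => Complex.normSq_nonneg _))).mp h
    ext j i
    have h2 := (Finset.sum_eq_zero_iff_of_nonneg
        (fun j _ => Complex.normSq_nonneg (B j i))).mp (this i (Finset.mem_univ i)) j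
        (Finset.mem_univ j)
    simpa using Complex.normSq_eq_zero.mp h2
  simp [hB]

lemma psd_smul {d : ℕ} {A : Matrix (Fin d) (Fin d) ℂ} (hA : A.PosSemidef) {c : ℝ}
    (hc : 0 ≤ c) : ((c : ℂ) • A).PosSemidef := by
  refine Matrix.PosSemidef.of_dotProduct_mulVec_nonneg ?_ ?_
  · unfold Matrix.IsHermitian
    rw [Matrix.conjTranspose_smul, hA.1.eq]
    congr 1
    simp
  · intro x
    rw [Matrix.smul_mulVec, dotProduct_smul]
    exact smul_nonneg (by exact_mod_cast hc) (hA.dotProduct_mulVec_nonneg x)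

lemma key_ineq {d n : ℕ} (M : Fin n → Matrix (Fin d) (Fin d) ℂ) (α : ℝ)
    (hub : ∀ a ∈ { a : ℝ | ∃ (ρ : Matrix (Fin d) (Fin d) ℂ) (j : Fin n),
            IsDensity ρ ∧ a = ((ρ * M j).trace).re }, a ≤ α)
    (k : Fin n) {H : Matrix (Fin d) (Fin d) ℂ} (hH : H.PosSemidef) :
    (((M k)ᵀ * H).trace).re ≤ α * (H.trace).re := by
  set t := (H.trace).re with ht
  rcases eq_or_lt_of_le (psd_trace_re_nonneg hH) with h0 | hpos
  · have hz : H = 0 := psd_trace_eq_zero hH h0.symm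
    have htz : t = 0 := by rw [ht, ← h0]
    simp [hz, htz]
  · set ρ : Matrix (Fin d) (Fin d) ℂ := ((t⁻¹ : ℝ) : ℂ) • Hᵀ with hρ
    have hρd : IsDensity ρ := by
      refine ⟨psd_smul hH.transpose (inv_nonneg.mpr hpos.le), ?_⟩
      rw [hρ, Matrix.trace_smul, Matrix.trace_transpose, smul_eq_mul,
        psd_trace_real hH, ← ht, ← Complex.ofReal_mul, inv_mul_cancel₀ hpos.ne']
      simp
    have hle := hub _ ⟨ρ, k, hρd, rfl⟩
    have htr : (ρ * M k).trace = ((t⁻¹ : ℝ) : ℂ) * (((M k)ᵀ * H).trace) := by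
      rw [hρ, Matrix.smul_mul, Matrix.trace_smul, smul_eq_mul, ← Matrix.trace_transpose (Hᵀ * M k),
        Matrix.transpose_mul, Matrix.transpose_transpose]
    rw [htr] at hle
    simp only [Complex.re_ofReal_mul] at hle
    calc (((M k)ᵀ * H).trace).re = t * (t⁻¹ * (((M k)ᵀ * H).trace).re) := by
          field_simp
          rw [mul_div_assoc, div_self (by rw [ht]; exact hpos.ne'), mul_one]
      _ ≤ t * α := mul_le_mul_of_nonneg_left hle hpos.le
      _ = α * t := mul_comm _ _

lemma card_perm_eq {n : ℕ} [NeZero n] (j i : Fin n) :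
    (Finset.univ.filter (fun π : Equiv.Perm (Fin n) => π j = i)).card
      = Nat.factorial (n - 1) := by
  obtain ⟨m, rfl⟩ : ∃ m, n = m + 1 := ⟨n - 1, (Nat.succ_pred_eq_of_pos (NeZero.pos n)).symm⟩
  rw [← Fintype.card_subtype]
  have e1 : {π : Equiv.Perm (Fin (m + 1)) // π j = i}
      ≃ {π : Equiv.Perm (Fin (m + 1)) // π 0 = i} :=
    Equiv.subtypeEquiv (Equiv.mulRight (Equiv.swap (0 : Fin (m + 1)) j)) (fun π => by
      simp [Equiv.Perm.mul_apply, Equiv.swap_apply_left])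
  have e2 : {π : Equiv.Perm (Fin (m + 1)) // π 0 = i}
      ≃ {p : Fin (m + 1) × Equiv.Perm (Fin m) // p.1 = i} :=
    Equiv.subtypeEquiv Equiv.Perm.decomposeFin (fun π => by
      constructor
      · intro h
        obtain ⟨p, σ, hp⟩ : ∃ p σ, Equiv.Perm.decomposeFin π = (p, σ) := ⟨_, _, rfl⟩
        have hπ : π = Equiv.Perm.decomposeFin.symm (p, σ) := by
          rw [← hp, Equiv.symm_apply_apply]
        rw [hp]
        rw [hπ, Equiv.Perm.decomposeFin_symm_apply_zero] at h
        exact h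
      · intro h
        obtain ⟨p, σ, hp⟩ : ∃ p σ, Equiv.Perm.decomposeFin π = (p, σ) := ⟨_, _, rfl⟩
        have hπ : π = Equiv.Perm.decomposeFin.symm (p, σ) := by
          rw [← hp, Equiv.symm_apply_apply]
        rw [hp] at h
        rw [hπ, Equiv.Perm.decomposeFin_symm_apply_zero]
        exact h)
  have e3 : {p : Fin (m + 1) × Equiv.Perm (Fin m) // p.1 = i} ≃ Equiv.Perm (Fin m) :=
    { toFun := fun p => p.1.2
      invFun := fun σ => ⟨(i, σ), rfl⟩
      left_inv := fun p => by
        obtain ⟨⟨a, b⟩, h⟩ := p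
        simp at h
        subst h
        rfl
      right_inv := fun σ => rfl }
  rw [Fintype.card_congr (e1.trans (e2.trans e3)), Fintype.card_perm, Fintype.card_fin]
  simp

theorem entanglement_does_not_improve_labeling
    {d n : ℕ} [NeZero n]
    (M : Fin n → Matrix (Fin d) (Fin d) ℂ)
    (hM : ∀ j, (M j).PosSemidef) (hMsum : ∑ j, M j = 1)
    (α : ℝ)
    (hα : IsGreatest { a : ℝ | ∃ (ρ : Matrix (Fin d) (Fin d) ℂ) (j : Fin n),
            IsDensity ρ ∧ a = ((ρ * M j).trace).re } α) :
    IsGreatest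
      { s : ℝ | ∃ (H : Fin n → Equiv.Perm (Fin n) → Matrix (Fin d) (Fin d) ℂ)
          (ρ : Matrix (Fin d) (Fin d) ℂ),
          IsDensity ρ ∧ (∀ i π, (H i π).PosSemidef) ∧
          (∀ i, ∑ π : Equiv.Perm (Fin n), H i π = ρ) ∧
          s = ((Nat.factorial n : ℝ))⁻¹ * ∑ π : Equiv.Perm (Fin n),
            ∑ k, (((M k)ᵀ * H (π k) π).trace).re }
      (((Nat.factorial (n - 1) : ℝ))⁻¹ * α) := by
  have hfn : (0 : ℝ) < (Nat.factorial n : ℝ) := by exact_mod_cast Nat.factorial_pos n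
  have hfn1 : (0 : ℝ) < (Nat.factorial (n - 1) : ℝ) := by exact_mod_cast Nat.factorial_pos (n - 1)
  have hnfact : (n : ℝ) * (Nat.factorial (n - 1) : ℝ) = (Nat.factorial n : ℝ) := by
    exact_mod_cast Nat.mul_factorial_pred (NeZero.ne n)
  constructor
  · -- membership: the simple strategy achieves the bound
    obtain ⟨ρ₀, j₀, hρ₀, hαeq⟩ := hα.1
    set c : ℂ := (((Nat.factorial (n - 1) : ℝ))⁻¹ : ℂ) with hc
    refine ⟨fun i π => if π j₀ = i then c • ρ₀ᵀ else 0, ρ₀ᵀ,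
      ⟨hρ₀.1.transpose, by rw [Matrix.trace_transpose, hρ₀.2]⟩, ?_, ?_, ?_⟩
    · intro i π
      by_cases h : π j₀ = i
      · simpa [h, hc] using psd_smul hρ₀.1.transpose (by positivity :
          (0:ℝ) ≤ ((Nat.factorial (n - 1) : ℝ))⁻¹)
      · simp [h, Matrix.PosSemidef.zero]
    · intro i
      rw [← Finset.sum_filter, Finset.sum_const, card_perm_eq j₀ i,
        ← Nat.cast_smul_eq_nsmul ℂ, smul_smul, hc]
      rw [show ((Nat.factorial (n - 1) : ℕ) : ℂ) * (((Nat.factorial (n - 1) : ℝ))⁻¹ : ℂ)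
          = 1 by push_cast; field_simp, one_smul]
    · have hterm : ∀ π : Equiv.Perm (Fin n),
          ∑ k, (((M k)ᵀ * (if π j₀ = π k then c • ρ₀ᵀ else 0)).trace).re
            = ((Nat.factorial (n - 1) : ℝ))⁻¹ * α := by
        intro π
        have hcond : ∀ k : Fin n, (π j₀ = π k) = (j₀ = k) := by
          intro k; simp [Equiv.apply_eq_iff_eq]
        simp only [hcond]
        have hite : ∀ k : Fin n,
            (((M k)ᵀ * (if j₀ = k then c • ρ₀ᵀ else 0)).trace).re
              = if j₀ = k then (((M k)ᵀ * (c • ρ₀ᵀ)).trace).re else 0 := by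
          intro k; by_cases h : j₀ = k <;> simp [h]
        rw [Finset.sum_congr rfl (fun k _ => hite k), Finset.sum_ite_eq Finset.univ j₀
            (fun k => (((M k)ᵀ * (c • ρ₀ᵀ)).trace).re)]
        simp only [Finset.mem_univ, if_true]
        rw [Matrix.mul_smul, Matrix.trace_smul, hc, smul_eq_mul,
          ← Matrix.transpose_mul, Matrix.trace_transpose, ← Complex.ofReal_inv,
          Complex.re_ofReal_mul, hαeq]
      rw [Finset.sum_congr rfl (fun π _ => hterm π), Finset.sum_const, Finset.card_univ,
        Fintype.card_perm, Fintype.card_fin, nsmul_eq_mul]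
      field_simp
  · -- upper bound
    rintro s ⟨H, ρ, hρ, hHpsd, hHsum, rfl⟩
    have hS : ∑ π : Equiv.Perm (Fin n), ∑ k, (((M k)ᵀ * H (π k) π).trace).re
        ≤ α * (n : ℝ) := by
      calc ∑ π : Equiv.Perm (Fin n), ∑ k, (((M k)ᵀ * H (π k) π).trace).re
          ≤ ∑ π : Equiv.Perm (Fin n), ∑ k, α * ((H (π k) π).trace).re :=
            Finset.sum_le_sum (fun π _ => Finset.sum_le_sum (fun k _ =>
              key_ineq M α hα.2 k (hHpsd _ _)))
        _ = α * ∑ π : Equiv.Perm (Fin n), ∑ k, ((H (π k) π).trace).re := by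
            rw [Finset.mul_sum]
            exact Finset.sum_congr rfl fun π _ => (Finset.mul_sum _ _ _).symm
        _ = α * (n : ℝ) := by
            congr 1
            have hre : ∀ π : Equiv.Perm (Fin n),
                ∑ k, ((H (π k) π).trace).re = ∑ i, ((H i π).trace).re := fun π =>
              Equiv.sum_comp π (fun i => ((H i π).trace).re)
            rw [Finset.sum_congr rfl (fun π _ => hre π), Finset.sum_comm]
            have : ∀ i : Fin n, ∑ π : Equiv.Perm (Fin n), ((H i π).trace).re = 1 := by
              intro i
              rw [← Complex.re_sum, ← Matrix.trace_sum, hHsum i, hρ.2, Complex.one_re]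
            rw [Finset.sum_congr rfl (fun i _ => this i)]
            simp
    calc ((Nat.factorial n : ℝ))⁻¹ * ∑ π : Equiv.Perm (Fin n),
          ∑ k, (((M k)ᵀ * H (π k) π).trace).re
        ≤ ((Nat.factorial n : ℝ))⁻¹ * (α * (n : ℝ)) :=
          mul_le_mul_of_nonneg_left hS (by positivity)
      _ = ((Nat.factorial (n - 1) : ℝ))⁻¹ * α := by
          have hn0 : ((n : ℝ)) ≠ 0 := by
            exact_mod_cast (NeZero.pos n).ne'
          rw [← hnfact]
          field_simp
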